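/- For any permutation π of {1,...,n} (extended with π₀ = 0 and π_{n+1} = n+1) and any transposition τ(i,j,k) with 1 ≤ i < j < k ≤ n+1, the number of transposition breakpoints changes by at most 3 in absolute value: |b_τ(π) − b_τ(π·τ)| ≤ 3. -/

import Mathlib

/-- Extended unsigned permutation of `{1,…,n}`: `p 0 = 0`, `p (n+1) = n+1`,
`p` maps `{1,…,n}` bijectively onto `{1,…,n}`. -/
def IsExtPerm (n : ℕ) (p : ℕ → ℤ) : Prop :=
  p 0 = 0 ∧ p (n+1) = (n : ℤ) + 1 ∧
  (∀ i, 1 ≤ i → i ≤ n → 1 ≤ p i ∧ p i ≤ (n : ℤ)) ∧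
  (∀ i j, 1 ≤ i → i ≤ n → 1 ≤ j → j ≤ n → p i = p j → i = j)

/-- Number of transposition (= signed reversal) breakpoints of the extended
permutation: pairs `(p i, p (i+1))`, `0 ≤ i ≤ n`, with `p (i+1) - p i ≠ 1`. -/
def tBreakpoints (n : ℕ) (p : ℕ → ℤ) : ℕ :=
  ((Finset.range (n+1)).filter (fun i => p (i+1) - p i ≠ 1)).card

/-- The transposition τ(i,j,k): the result is
`(p₁ … p_{i-1} p_j … p_{k-1} p_i … p_{j-1} p_k … p_n)`. -/
def applyT (p : ℕ → ℤ) (i j k : ℕ) : ℕ → ℤ := fun l =>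
  if l < i ∨ k ≤ l then p l
  else if l < i + (k - j) then p (l + (j - i))
  else p (l - (k - j))

/-- Index map: `applyT p i j k l = p (fIdx i j k l)`. -/
def fIdx (i j k l : ℕ) : ℕ :=
  if l < i ∨ k ≤ l then l else if l < i + (k - j) then l + (j - i) else l - (k - j)

/-- Inverse of `fIdx`. -/
def gIdx (i j k m : ℕ) : ℕ :=
  if m < i ∨ k ≤ m then m else if m < j then m + (k - j) else m - (j - i)

lemma applyT_eq (p : ℕ → ℤ) (i j k l : ℕ) :
    applyT p i j k l = p (fIdx i j k l) := by
  unfold applyT fIdx; split_ifs <;> rfl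

lemma fIdx_step (i j k l : ℕ) (hi : 1 ≤ i) (hij : i < j) (hjk : j < k)
    (h1 : l ≠ i - 1) (h2 : l ≠ i + (k - j) - 1) (h3 : l ≠ k - 1) :
    fIdx i j k (l + 1) = fIdx i j k l + 1 := by
  unfold fIdx; split_ifs <;> omega

lemma fIdx_gIdx (i j k m : ℕ) (hi : 1 ≤ i) (hij : i < j) (hjk : j < k) :
    fIdx i j k (gIdx i j k m) = m := by
  unfold fIdx gIdx; split_ifs <;> omega

lemma gIdx_fIdx (i j k l : ℕ) (hi : 1 ≤ i) (hij : i < j) (hjk : j < k) :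
    gIdx i j k (fIdx i j k l) = l := by
  unfold fIdx gIdx; split_ifs <;> omega

theorem stmt0 (n : ℕ) (p : ℕ → ℤ) (hp : IsExtPerm n p)
    (i j k : ℕ) (hi : 1 ≤ i) (hij : i < j) (hjk : j < k) (hk : k ≤ n + 1) :
    |(tBreakpoints n p : ℤ) - (tBreakpoints n (applyT p i j k) : ℤ)| ≤ 3 := by
  classical
  set q := applyT p i j k with hqdef
  set Cp : ℕ → Prop := fun l => p (l+1) - p l ≠ 1 with hCp
  set Cq : ℕ → Prop := fun l => q (l+1) - q l ≠ 1 with hCq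
  set R : Finset ℕ := Finset.range (n+1) with hR
  set B1 : Finset ℕ := {i - 1, i + (k - j) - 1, k - 1} with hB1
  set B2 : Finset ℕ := {i - 1, j - 1, k - 1} with hB2
  -- condition transport
  have hstep : ∀ l, l ∉ B1 → (Cq l ↔ Cp (fIdx i j k l)) := by
    intro l hl
    simp only [hB1, Finset.mem_insert, Finset.mem_singleton, not_or] at hl
    obtain ⟨h1, h2, h3⟩ := hl
    simp only [hCq, hCp, hqdef, applyT_eq, fIdx_step i j k l hi hij hjk h1 h2 h3]
  -- the bijection between the off-boundary filtered sets
  have hkey : ((R \ B1).filter Cq).card = ((R \ B2).filter Cp).card := by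
    apply Finset.card_bij (fun l _ => fIdx i j k l)
    · intro l hl
      simp only [Finset.mem_filter, Finset.mem_sdiff, hR, Finset.mem_range, hB1, hB2,
        Finset.mem_insert, Finset.mem_singleton, not_or] at hl ⊢
      obtain ⟨⟨hln, h1, h2, h3⟩, hc⟩ := hl
      refine ⟨⟨?_, ?_⟩, ?_⟩
      · unfold fIdx; split_ifs <;> omega
      · unfold fIdx; split_ifs <;> omega
      · exact (hstep l (by
          simp only [hB1, Finset.mem_insert, Finset.mem_singleton, not_or]
          exact ⟨h1, h2, h3⟩)).mp hc
    · intro a ha b hb hab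
      have := congrArg (gIdx i j k) hab
      rwa [gIdx_fIdx i j k a hi hij hjk, gIdx_fIdx i j k b hi hij hjk] at this
    · intro m hm
      refine ⟨gIdx i j k m, ?_, fIdx_gIdx i j k m hi hij hjk⟩
      simp only [Finset.mem_filter, Finset.mem_sdiff, hR, Finset.mem_range, hB1, hB2,
        Finset.mem_insert, Finset.mem_singleton, not_or] at hm ⊢
      obtain ⟨⟨hmn, h1, h2, h3⟩, hc⟩ := hm
      have hg1 : gIdx i j k m < n + 1 := by unfold gIdx; split_ifs <;> omega
      have hg2 : gIdx i j k m ∉ B1 := by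
        simp only [hB1, Finset.mem_insert, Finset.mem_singleton, not_or]
        unfold gIdx; split_ifs <;> omega
      refine ⟨⟨hg1, ?_⟩, ?_⟩
      · simpa only [hB1, Finset.mem_insert, Finset.mem_singleton, not_or] using hg2
      · rw [hstep _ hg2, fIdx_gIdx i j k m hi hij hjk]; exact hc
  -- counting
  have split : ∀ (C : ℕ → Prop) [DecidablePred C] (B : Finset ℕ),
      (R.filter C).card = ((R \ B).filter C).card + ((R ∩ B).filter C).card := by
    intro C _ B
    rw [← Finset.card_union_of_disjoint, ← Finset.filter_union,
      Finset.sdiff_union_inter]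
    exact Finset.disjoint_filter_filter (Finset.sdiff_disjoint.mono_right
      Finset.inter_subset_right)
  have h1 : (tBreakpoints n q) = ((R \ B1).filter Cq).card + ((R ∩ B1).filter Cq).card :=
    split Cq B1
  have h2 : (tBreakpoints n p) = ((R \ B2).filter Cp).card + ((R ∩ B2).filter Cp).card :=
    split Cp B2
  have hb1 : ((R ∩ B1).filter Cq).card ≤ 3 := by
    calc ((R ∩ B1).filter Cq).card ≤ B1.card :=
          Finset.card_le_card ((Finset.filter_subset _ _).trans Finset.inter_subset_right)
      _ ≤ 3 := by
          apply (Finset.card_insert_le _ _).trans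
          simpa using Nat.add_le_add_right (Finset.card_insert_le (i + (k - j) - 1) ({k - 1} : Finset ℕ)) 1
  have hb2 : ((R ∩ B2).filter Cp).card ≤ 3 := by
    calc ((R ∩ B2).filter Cp).card ≤ B2.card :=
          Finset.card_le_card ((Finset.filter_subset _ _).trans Finset.inter_subset_right)
      _ ≤ 3 := by
          apply (Finset.card_insert_le _ _).trans
          simpa using Nat.add_le_add_right (Finset.card_insert_le (j - 1) ({k - 1} : Finset ℕ)) 1
  rw [abs_le]
  constructor <;> omega
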